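/- For every k ≥ 1 the operators E_k and F_k preserve both the ideal J and the product ideal mJ: E_k(J) ⊆ J, F_k(J) ⊆ J, E_k(mJ) ⊆ mJ, and F_k(mJ) ⊆ mJ. Consequently E_k and F_k induce well-defined operators on the quotient J/mJ. -/

import Mathlib

open MvPolynomial

/-- The polynomial ring `R = ℂ[x_1,…,x_n,y_1,…,y_n]`: the variable `x_i` is
`X (Sum.inl i)` and `y_i` is `X (Sum.inr i)`. -/
abbrev Rn (n : ℕ) : Type := MvPolynomial (Fin n ⊕ Fin n) ℂ

/-- The diagonal action of a permutation `σ ∈ S_n` on `R`, permuting the `x_i` and the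
`y_i` simultaneously. -/
noncomputable def permR (n : ℕ) (σ : Equiv.Perm (Fin n)) : Rn n →ₐ[ℂ] Rn n :=
  MvPolynomial.rename (Sum.map σ σ)

/-- A polynomial is symmetric if it is fixed by the diagonal `S_n`-action. -/
def IsSymP {n : ℕ} (f : Rn n) : Prop := ∀ σ : Equiv.Perm (Fin n), permR n σ f = f

/-- A polynomial is antisymmetric if every permutation acts on it by its sign. -/
def IsAntiSymP {n : ℕ} (f : Rn n) : Prop :=
  ∀ σ : Equiv.Perm (Fin n), permR n σ f = (Equiv.Perm.sign σ : ℤ) • f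

/-- The ideal `I_+` generated by all symmetric polynomials with zero constant term. -/
noncomputable def Iplus (n : ℕ) : Ideal (Rn n) :=
  Ideal.span {f | IsSymP f ∧ constantCoeff f = 0}

/-- The ideal `J` generated by all antisymmetric polynomials. -/
noncomputable def Jid (n : ℕ) : Ideal (Rn n) :=
  Ideal.span {f | IsAntiSymP f}

/-- The maximal homogeneous ideal `m = (x_1,…,x_n,y_1,…,y_n)`. -/
noncomputable def mId (n : ℕ) : Ideal (Rn n) :=
  Ideal.span (Set.range X)

/-- The operator `E_k = Σ_i y_i^k ∂/∂x_i`. -/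
noncomputable def Eop (n k : ℕ) : Rn n →ₗ[ℂ] Rn n :=
  ∑ i : Fin n,
    (LinearMap.mulLeft ℂ ((X (Sum.inr i) : Rn n) ^ k)) ∘ₗ (pderiv (Sum.inl i)).toLinearMap

/-- The operator `F_k = Σ_i x_i^k ∂/∂y_i`. -/
noncomputable def Fop (n k : ℕ) : Rn n →ₗ[ℂ] Rn n :=
  ∑ i : Fin n,
    (LinearMap.mulLeft ℂ ((X (Sum.inl i) : Rn n) ^ k)) ∘ₗ (pderiv (Sum.inr i)).toLinearMap

/-- The operator `E_k^* = Σ_i x_i (∂/∂y_i)^k`. -/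
noncomputable def Estar (n k : ℕ) : Rn n →ₗ[ℂ] Rn n :=
  ∑ i : Fin n,
    (LinearMap.mulLeft ℂ ((X (Sum.inl i) : Rn n))) ∘ₗ ((pderiv (Sum.inr i)).toLinearMap ^ k)

/-- The operator `F_k^* = Σ_i y_i (∂/∂x_i)^k`. -/
noncomputable def Fstar (n k : ℕ) : Rn n →ₗ[ℂ] Rn n :=
  ∑ i : Fin n,
    (LinearMap.mulLeft ℂ ((X (Sum.inr i) : Rn n))) ∘ₗ ((pderiv (Sum.inl i)).toLinearMap ^ k)

/-- The constant-coefficient differential operator `g(∂/∂x_1,…,∂/∂x_n,∂/∂y_1,…,∂/∂y_n)`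
obtained by substituting partial derivatives for the variables of `g`. -/
noncomputable def applyDeriv (n : ℕ) (g : Rn n) : Module.End ℂ (Rn n) :=
  ∑ s ∈ g.support, (MvPolynomial.coeff s g) •
    (((Finset.univ : Finset (Fin n ⊕ Fin n)).toList).map
      (fun j => ((pderiv j).toLinearMap : Module.End ℂ (Rn n)) ^ (s j))).prod

/-- The space of diagonal harmonics `DH_n`. -/
def DH (n : ℕ) : Set (Rn n) :=
  {f | ∀ g : Rn n, IsSymP g → constantCoeff g = 0 → applyDeriv n g f = 0}

/-- The Vandermonde determinant `Δ(x) = ∏_{i<j}(x_i − x_j)`. -/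
noncomputable def Dx (n : ℕ) : Rn n :=
  ∏ p ∈ Finset.univ.filter (fun p : Fin n × Fin n => p.1 < p.2),
    (X (Sum.inl p.1) - X (Sum.inl p.2))

/-- The Vandermonde determinant `Δ(y) = ∏_{i<j}(y_i − y_j)`. -/
noncomputable def Dy (n : ℕ) : Rn n :=
  ∏ p ∈ Finset.univ.filter (fun p : Fin n × Fin n => p.1 < p.2),
    (X (Sum.inr p.1) - X (Sum.inr p.2))

/-- Evaluation of a polynomial `φ` in `m` commuting variables on a family of `m`
pairwise commuting endomorphisms. -/
noncomputable def evalEndo {V : Type*} [AddCommMonoid V] [Module ℂ V] {m : ℕ}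
    (T : Fin m → Module.End ℂ V) (φ : MvPolynomial (Fin m) ℂ) : Module.End ℂ V :=
  ∑ s ∈ φ.support, (MvPolynomial.coeff s φ) •
    (((List.finRange m).map (fun j => (T j) ^ (s j))).prod)

/-- Weights recording the bigrading of `R`: an `x`-variable has bidegree `(1,0)` and a
`y`-variable has bidegree `(0,1)`. -/
def wtB (n : ℕ) : Fin n ⊕ Fin n → ℕ × ℕ :=
  Sum.elim (fun _ => ((1 : ℕ), (0 : ℕ))) (fun _ => ((0 : ℕ), (1 : ℕ)))

/-- Bihomogeneity of bidegree `d = (d_x, d_y)` with respect to the bigrading of `R`. -/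
def BiHom (n : ℕ) (f : Rn n) (d : ℕ × ℕ) : Prop :=
  MvPolynomial.IsWeightedHomogeneous (wtB n) f d

section Aux

variable {n k : ℕ}

/-- A general operator `Σ_i X(u i)^k ∂_{v i}`. -/
noncomputable def gop (n : ℕ) (u v : Fin n → Fin n ⊕ Fin n) (k : ℕ) : Rn n →ₗ[ℂ] Rn n :=
  ∑ i : Fin n,
    (LinearMap.mulLeft ℂ ((X (u i) : Rn n) ^ k)) ∘ₗ (pderiv (v i)).toLinearMap

lemma gop_apply (u v : Fin n → Fin n ⊕ Fin n) (f : Rn n) :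
    gop n u v k f = ∑ i : Fin n, X (u i) ^ k * pderiv (v i) f := by
  simp [gop]

lemma Eop_eq : Eop n k = gop n Sum.inr Sum.inl k := rfl
lemma Fop_eq : Fop n k = gop n Sum.inl Sum.inr k := rfl

lemma gop_mul (u v : Fin n → Fin n ⊕ Fin n) (p q : Rn n) :
    gop n u v k (p * q) = gop n u v k p * q + p * gop n u v k q := by
  rw [gop_apply, gop_apply, gop_apply, Finset.sum_mul, Finset.mul_sum,
    ← Finset.sum_add_distrib]
  refine Finset.sum_congr rfl fun i _ => ?_
  rw [pderiv_mul]; ring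

lemma gop_perm (u v : Fin n → Fin n ⊕ Fin n)
    (hu : ∀ (σ : Equiv.Perm (Fin n)) i, Sum.map σ σ (u i) = u (σ i))
    (hv : ∀ (σ : Equiv.Perm (Fin n)) i, Sum.map σ σ (v i) = v (σ i))
    (σ : Equiv.Perm (Fin n)) (f : Rn n) :
    permR n σ (gop n u v k f) = gop n u v k (permR n σ f) := by
  have hinj : Function.Injective (Sum.map (σ : Fin n → Fin n) σ) :=
    Function.Injective.sumMap σ.injective σ.injective
  rw [gop_apply, map_sum, gop_apply,
    ← Equiv.sum_comp σ (fun i => (X (u i) : Rn n) ^ k * pderiv (v i) (permR n σ f))]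
  refine Finset.sum_congr rfl fun i _ => ?_
  simp only [permR, map_mul, map_pow, rename_X, hu σ i]
  rw [← hv σ i, pderiv_rename hinj]

lemma gop_antisym (u v : Fin n → Fin n ⊕ Fin n)
    (hu : ∀ (σ : Equiv.Perm (Fin n)) i, Sum.map σ σ (u i) = u (σ i))
    (hv : ∀ (σ : Equiv.Perm (Fin n)) i, Sum.map σ σ (v i) = v (σ i))
    {f : Rn n} (hf : IsAntiSymP f) : IsAntiSymP (gop n u v k f) := by
  intro σ
  rw [gop_perm u v hu hv σ f, hf σ, map_zsmul]

lemma gop_J (u v : Fin n → Fin n ⊕ Fin n)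
    (hu : ∀ (σ : Equiv.Perm (Fin n)) i, Sum.map σ σ (u i) = u (σ i))
    (hv : ∀ (σ : Equiv.Perm (Fin n)) i, Sum.map σ σ (v i) = v (σ i)) :
    ∀ f ∈ Jid n, gop n u v k f ∈ Jid n := by
  intro f hf
  refine Submodule.span_induction (p := fun x _ => gop n u v k x ∈ Jid n)
    (fun a ha => Ideal.subset_span (gop_antisym u v hu hv ha))
    (by simp only [map_zero]; exact zero_mem _)
    (fun x y _ _ hx hy => by
      show gop n u v k (x + y) ∈ Jid n
      rw [map_add]; exact add_mem hx hy)
    (fun r x hxmem hx => ?_) hf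
  show gop n u v k (r • x) ∈ Jid n
  rw [smul_eq_mul, gop_mul]
  exact add_mem (Ideal.mul_mem_left _ _ (hxmem)) (Ideal.mul_mem_left _ _ hx)

lemma gop_X_mul_mem (hk : 1 ≤ k) (u v : Fin n → Fin n ⊕ Fin n)
    (w : Fin n ⊕ Fin n) {j : Rn n} (hj : j ∈ Jid n) :
    gop n u v k (X w) * j ∈ mId n * Jid n := by
  classical
  rw [gop_apply, Finset.sum_mul]
  refine Ideal.sum_mem _ fun i _ => ?_
  rcases eq_or_ne (v i) w with h | h
  · rw [h, pderiv_X_self, mul_one]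
    have hXk : (X (u i) : Rn n) ^ k * j = X (u i) * (X (u i) ^ (k - 1) * j) := by
      rw [← mul_assoc, ← pow_succ']
      congr 2
      omega
    rw [hXk]
    exact Ideal.mul_mem_mul (Ideal.subset_span ⟨u i, rfl⟩) (Ideal.mul_mem_left _ _ hj)
  · rw [pderiv_X_of_ne (Ne.symm h), mul_zero, zero_mul]
    exact zero_mem _

lemma gop_mem_mul (hk : 1 ≤ k) (u v : Fin n → Fin n ⊕ Fin n)
    (hu : ∀ (σ : Equiv.Perm (Fin n)) i, Sum.map σ σ (u i) = u (σ i))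
    (hv : ∀ (σ : Equiv.Perm (Fin n)) i, Sum.map σ σ (v i) = v (σ i)) :
    ∀ f ∈ mId n * Jid n, gop n u v k f ∈ mId n * Jid n := by
  have key : ∀ p ∈ mId n, ∀ j ∈ Jid n, gop n u v k (p * j) ∈ mId n * Jid n := by
    intro p hp
    refine Submodule.span_induction
      (p := fun p _ => ∀ j ∈ Jid n, gop n u v k (p * j) ∈ mId n * Jid n)
      ?_ ?_ ?_ ?_ hp
    · rintro x ⟨w, rfl⟩ j hj
      rw [gop_mul]
      exact add_mem (gop_X_mul_mem hk u v w hj)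
        (Ideal.mul_mem_mul (Ideal.subset_span ⟨w, rfl⟩) (gop_J u v hu hv j hj))
    · intro j hj
      rw [zero_mul, map_zero]; exact zero_mem _
    · intro a b _ _ ha hb j hj
      rw [add_mul, map_add]
      exact add_mem (ha j hj) (hb j hj)
    · intro r a hamem ha j hj
      rw [smul_eq_mul, mul_assoc, gop_mul]
      refine add_mem (Ideal.mul_mem_left _ _ ?_) (Ideal.mul_mem_left _ _ (ha j hj))
      exact Ideal.mul_mem_mul hamem hj
  intro f hf
  refine Submodule.mul_induction_on hf (fun p hp j hj => key p hp j hj)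
    (fun x y hx hy => by rw [map_add]; exact add_mem hx hy)

end Aux

theorem stmt7 (n : ℕ) (hn : 1 ≤ n) :
    ∀ k : ℕ, 1 ≤ k →
      (∀ f ∈ Jid n, Eop n k f ∈ Jid n ∧ Fop n k f ∈ Jid n) ∧
      (∀ f ∈ mId n * Jid n, Eop n k f ∈ mId n * Jid n ∧ Fop n k f ∈ mId n * Jid n) := by
  intro k hk
  have hu : ∀ (σ : Equiv.Perm (Fin n)) (i : Fin n),
      Sum.map (σ : Fin n → Fin n) σ (Sum.inr i) = Sum.inr (σ i) := fun _ _ => rfl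
  have hv : ∀ (σ : Equiv.Perm (Fin n)) (i : Fin n),
      Sum.map (σ : Fin n → Fin n) σ (Sum.inl i) = Sum.inl (σ i) := fun _ _ => rfl
  refine ⟨fun f hf => ⟨?_, ?_⟩, fun f hf => ⟨?_, ?_⟩⟩
  · rw [Eop_eq]; exact gop_J _ _ hu hv f hf
  · rw [Fop_eq]; exact gop_J _ _ hv hu f hf
  · rw [Eop_eq]; exact gop_mem_mul hk _ _ hu hv f hf
  · rw [Fop_eq]; exact gop_mem_mul hk _ _ hv hu f hf
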